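/- The divergence operator maps the Brezzi-Douglas-Marini space BDM_k(K̂) = (P_k(K̂))² ⊕ span{curl(x^{k+1}y), curl(xy^{k+1})} onto P_{k-1}(K̂); that is, div BDM_k(K̂) = P_{k-1}(K̂). -/

import Mathlib

open MvPolynomial

noncomputable section

def Qset (p q : ℕ) : Set (MvPolynomial (Fin 2) ℝ) :=
  {f | f.degreeOf 0 ≤ p ∧ f.degreeOf 1 ≤ q}

def Pset (k : ℕ) : Set (MvPolynomial (Fin 2) ℝ) :=
  {f | f.totalDegree ≤ k}

def pdiv (v : MvPolynomial (Fin 2) ℝ × MvPolynomial (Fin 2) ℝ) : MvPolynomial (Fin 2) ℝ :=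
  pderiv 0 v.1 + pderiv 1 v.2

def pcurl (f : MvPolynomial (Fin 2) ℝ) :
    MvPolynomial (Fin 2) ℝ × MvPolynomial (Fin 2) ℝ :=
  (pderiv 1 f, -(pderiv 0 f))

def RTset (k : ℕ) : Set (MvPolynomial (Fin 2) ℝ × MvPolynomial (Fin 2) ℝ) :=
  (Qset (k + 1) k) ×ˢ (Qset k (k + 1))

def BDMset (k : ℕ) : Set (MvPolynomial (Fin 2) ℝ × MvPolynomial (Fin 2) ℝ) :=
  {v | ∃ p₁ ∈ Pset k, ∃ p₂ ∈ Pset k, ∃ a b : ℝ,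
    v = (p₁, p₂) + a • pcurl (X 0 ^ (k + 1) * X 1) + b • pcurl (X 0 * X 1 ^ (k + 1))}

-- auxiliary lemmas

lemma totalDegree_pderiv_le' (i : Fin 2) (f : MvPolynomial (Fin 2) ℝ) (n : ℕ)
    (hf : f.totalDegree ≤ n + 1) : (pderiv i f).totalDegree ≤ n := by
  conv_lhs => rw [f.as_sum, map_sum]
  refine (totalDegree_finset_sum _ _).trans (Finset.sup_le fun m hm => ?_)
  rw [pderiv_monomial]
  by_cases h0 : m i = 0
  · simp [h0]
  · refine (totalDegree_monomial_le _ _).trans ?_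
    have hle : Finsupp.single i 1 ≤ m := by
      intro j
      rcases eq_or_ne j i with rfl | hj
      · simpa [Finsupp.single_eq_same] using Nat.one_le_iff_ne_zero.2 h0
      · simp [Finsupp.single_eq_of_ne hj]
    have hsum : ((m - Finsupp.single i 1).sum fun _ e => e) + 1 = m.sum fun _ e => e := by
      have h := tsub_add_cancel_of_le hle
      calc ((m - Finsupp.single i 1).sum fun _ e => e) + 1
          = ((m - Finsupp.single i 1).sum fun _ e => e) +
            ((Finsupp.single i 1).sum fun _ e => e) := by
            rw [Finsupp.sum_single_index]; rfl
        _ = ((m - Finsupp.single i 1) + Finsupp.single i 1).sum fun _ e => e := by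
            rw [Finsupp.sum_add_index'] <;> simp
        _ = m.sum fun _ e => e := by rw [h]
    have hmle : (m.sum fun _ e => e) ≤ n + 1 := le_trans (le_totalDegree hm) hf
    simp only [Function.id_def]
    omega

def antider (f : MvPolynomial (Fin 2) ℝ) : MvPolynomial (Fin 2) ℝ :=
  ∑ m ∈ f.support, monomial (m + Finsupp.single 0 1) (coeff m f / (m 0 + 1))

lemma pderiv_antider (f : MvPolynomial (Fin 2) ℝ) : pderiv 0 (antider f) = f := by
  rw [antider, map_sum]
  conv_rhs => rw [← f.support_sum_monomial_coeff]
  refine Finset.sum_congr rfl fun m hm => ?_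
  rw [pderiv_monomial, add_tsub_cancel_right]
  congr 1
  have h0 : ((m + Finsupp.single (0 : Fin 2) 1 : Fin 2 →₀ ℕ)) 0 = m 0 + 1 := by
    simp
  rw [h0]
  push_cast
  field_simp

lemma totalDegree_antider_le (f : MvPolynomial (Fin 2) ℝ) (n : ℕ) (hf : f.totalDegree ≤ n) :
    (antider f).totalDegree ≤ n + 1 := by
  refine (totalDegree_finset_sum _ _).trans (Finset.sup_le fun m hm => ?_)
  refine (totalDegree_monomial_le _ _).trans ?_
  have : ((m + Finsupp.single 0 1).sum fun _ e => e) = (m.sum fun _ e => e) + 1 := by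
    rw [Finsupp.sum_add_index'] <;> simp [Finsupp.sum_single_index]
  simp only [Function.id_def]
  rw [this]
  exact Nat.add_le_add_right (le_trans (le_totalDegree hm) hf) 1

lemma pdiv_pcurl (f : MvPolynomial (Fin 2) ℝ) : pdiv (pcurl f) = 0 := by
  have h : ∀ g : MvPolynomial (Fin 2) ℝ, pderiv 0 (pderiv 1 g) = pderiv 1 (pderiv 0 g) := by
    intro g
    induction g using MvPolynomial.induction_on with
    | C a => simp
    | add p q hp hq => simp [map_add, hp, hq]
    | mul_X p s hp =>
      fin_cases s <;>
        simp [pderiv_mul, pderiv_X_self, map_add, hp, pderiv_X] <;> ring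
  simp [pdiv, pcurl, h f]

theorem div_BDM_eq_P (k : ℕ) (hk : 1 ≤ k) : pdiv '' BDMset k = Pset (k - 1) := by
  obtain ⟨n, rfl⟩ : ∃ n, k = n + 1 := ⟨k - 1, (Nat.succ_pred_eq_of_pos hk).symm⟩
  simp only [Nat.add_sub_cancel]
  ext f
  constructor
  · rintro ⟨v, ⟨p₁, hp₁, p₂, hp₂, a, b, rfl⟩, rfl⟩
    have h1 : pdiv ((p₁, p₂) + a • pcurl (X 0 ^ (n + 1 + 1) * X 1)
        + b • pcurl (X 0 * X 1 ^ (n + 1 + 1)))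
        = pderiv 0 p₁ + pderiv 1 p₂
          + a • pdiv (pcurl (X 0 ^ (n + 1 + 1) * X 1))
          + b • pdiv (pcurl (X 0 * X 1 ^ (n + 1 + 1))) := by
      simp only [pdiv, Prod.fst_add, Prod.snd_add, Prod.smul_fst, Prod.smul_snd,
        map_add, map_smul, Derivation.map_smul, smul_add]
      module
    rw [h1, pdiv_pcurl, pdiv_pcurl, smul_zero, smul_zero, add_zero, add_zero]
    exact le_trans (totalDegree_add _ _)
      (max_le (totalDegree_pderiv_le' _ _ _ hp₁) (totalDegree_pderiv_le' _ _ _ hp₂))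
  · intro hf
    refine ⟨(antider f, 0), ⟨antider f, totalDegree_antider_le f n hf, 0, ?_, 0, 0, ?_⟩, ?_⟩
    · simp [Pset]
    · simp
    · simp [pdiv, pderiv_antider]
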